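/- A finite simple graph G has no K₄ minor if and only if G can be reduced to the empty graph by iteratively applying, in any order, the following three operations: removing a vertex of degree at most 1; removing a vertex of degree 2 lying in a triangle; and contracting an edge incident to a vertex of degree 2 not lying in a triangle. -/

import Mathlib

open SimpleGraph

/-- `G` has a `K₄` minor (branch-set formulation: four nonempty, pairwise disjoint,
connected branch sets with an edge between every two of them). -/
def HasK4Minor {V : Type*} (G : SimpleGraph V) : Prop :=
  ∃ B : Fin 4 → Set V,
    (∀ i, (B i).Nonempty) ∧
    (∀ i, (G.induce (B i)).Connected) ∧
    (∀ i j, i ≠ j → Disjoint (B i) (B j)) ∧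
    (∀ i j, i ≠ j → ∃ u ∈ B i, ∃ v ∈ B j, G.Adj u v)

/-- `X` is a transversal of `G`: the graph `G − X` has no `K₄` minor. -/
def IsTransversal {V : Type*} (G : SimpleGraph V) (X : Finset V) : Prop :=
  ¬ HasK4Minor (G.induce ((↑X : Set V)ᶜ))

/-- `s(G)`: the minimum size of a transversal of `G`. -/
noncomputable def transNum {V : Type*} (G : SimpleGraph V) : ℕ :=
  sInf {n : ℕ | ∃ X : Finset V, X.card = n ∧ IsTransversal G X}

/-- The graph obtained from `G` by removing the vertex `v` (encoded on the same vertex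
type: `v` keeps existing but becomes isolated, which is equivalent to deleting it). -/
def eraseVertex {V : Type*} (G : SimpleGraph V) (v : V) : SimpleGraph V where
  Adj a b := G.Adj a b ∧ a ≠ v ∧ b ≠ v
  symm := ⟨by rintro a b ⟨h, ha, hb⟩; exact ⟨h.symm, hb, ha⟩⟩
  loopless := ⟨by rintro a ⟨h, -, -⟩; exact G.ne_of_adj h rfl⟩

/-- The graph obtained from `G` by contracting the edge `uv` towards `u` (encoded on the
same vertex type: `v` becomes isolated and its other neighbors become neighbors of `u`;
loops and parallel edges are discarded). -/
def contractTo {V : Type*} (G : SimpleGraph V) (u v : V) : SimpleGraph V where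
  Adj a b := a ≠ b ∧ a ≠ v ∧ b ≠ v ∧
    (G.Adj a b ∨ (a = u ∧ G.Adj v b) ∨ (b = u ∧ G.Adj v a))
  symm := ⟨by
    rintro a b ⟨hne, ha, hb, h⟩
    refine ⟨hne.symm, hb, ha, ?_⟩
    rcases h with h | ⟨h1, h2⟩ | ⟨h1, h2⟩
    · exact Or.inl h.symm
    · exact Or.inr (Or.inr ⟨h1, h2⟩)
    · exact Or.inr (Or.inl ⟨h1, h2⟩)⟩
  loopless := ⟨by rintro a ⟨hne, -⟩; exact hne rfl⟩

/-- `G` can be reduced to the empty graph by iteratively (in any order):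
removing a vertex of degree at most 1; removing a degree-2 vertex lying in a triangle;
contracting an edge incident to a degree-2 vertex not lying in a triangle.
(Removed/contracted vertices are encoded as isolated vertices, so the empty graph is
encoded by the edgeless graph `⊥`; isolated vertices have degree 0 and can always be
removed, so this encoding is equivalent.) -/
inductive ReducesToEmpty {V : Type*} : SimpleGraph V → Prop
  | bot : ReducesToEmpty ⊥
  | delete_low_degree (G : SimpleGraph V) (v : V)
      (hdeg : (G.neighborSet v).Subsingleton)
      (h : ReducesToEmpty (eraseVertex G v)) : ReducesToEmpty G
  | delete_triangle (G : SimpleGraph V) (v x y : V)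
      (hxy : x ≠ y) (hN : G.neighborSet v = {x, y}) (hadj : G.Adj x y)
      (h : ReducesToEmpty (eraseVertex G v)) : ReducesToEmpty G
  | contract (G : SimpleGraph V) (u v x : V)
      (hux : u ≠ x) (hN : G.neighborSet v = {u, x}) (hnadj : ¬ G.Adj u x)
      (h : ReducesToEmpty (contractTo G u v)) : ReducesToEmpty G

section Infra
variable {V : Type*}

/-- `s` is connected within `G`: any two vertices of `s` are joined by a chain of
edges staying inside `s`. -/
def ConnOn (G : SimpleGraph V) (s : Set V) : Prop :=
  ∀ ⦃x⦄, x ∈ s → ∀ ⦃y⦄, y ∈ s →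
    Relation.ReflTransGen (fun a b => a ∈ s ∧ b ∈ s ∧ G.Adj a b) x y

/-- Branch-set formulation of having a `K₄` minor, using `ConnOn`. -/
def K4On (G : SimpleGraph V) : Prop :=
  ∃ B : Fin 4 → Set V,
    (∀ i, (B i).Nonempty) ∧
    (∀ i, ConnOn G (B i)) ∧
    (∀ i j, i ≠ j → Disjoint (B i) (B j)) ∧
    (∀ i j, i ≠ j → ∃ u ∈ B i, ∃ v ∈ B j, G.Adj u v)

lemma rt_bind {R R' : V → V → Prop}
    (h : ∀ a b, R a b → Relation.ReflTransGen R' a b)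
    {x y : V} (hxy : Relation.ReflTransGen R x y) : Relation.ReflTransGen R' x y := by
  induction hxy with
  | refl => exact Relation.ReflTransGen.refl
  | tail _ hstep ih => exact ih.trans (h _ _ hstep)

lemma chain_of_induce_reachable {G : SimpleGraph V} {s : Set V} {x y : ↥s}
    (h : (G.induce s).Reachable x y) :
    Relation.ReflTransGen (fun a b => a ∈ s ∧ b ∈ s ∧ G.Adj a b) (x : V) (y : V) := by
  obtain ⟨p⟩ := h
  induction p with
  | nil => exact Relation.ReflTransGen.refl
  | @cons a b c hab _ ih =>
    exact Relation.ReflTransGen.head ⟨a.2, b.2, hab⟩ ih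

lemma induce_reachable_of_chain {G : SimpleGraph V} {s : Set V} {x y : V}
    (h : Relation.ReflTransGen (fun a b => a ∈ s ∧ b ∈ s ∧ G.Adj a b) x y)
    (hx : x ∈ s) (hy : y ∈ s) :
    (G.induce s).Reachable ⟨x, hx⟩ ⟨y, hy⟩ := by
  induction h with
  | refl => exact Reachable.refl _
  | @tail b c _ hstep ih =>
    exact (ih hstep.1).trans (SimpleGraph.Adj.reachable (by exact hstep.2.2))

lemma connOn_iff_induce_connected {G : SimpleGraph V} {s : Set V} (hs : s.Nonempty) :
    ConnOn G s ↔ (G.induce s).Connected := by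
  constructor
  · intro h
    haveI : Nonempty ↥s := ⟨⟨hs.choose, hs.choose_spec⟩⟩
    refine ⟨fun x y => ?_⟩
    obtain ⟨x, hx⟩ := x
    obtain ⟨y, hy⟩ := y
    exact induce_reachable_of_chain (h hx hy) hx hy
  · intro h x hx y hy
    exact chain_of_induce_reachable (h.preconnected ⟨x, hx⟩ ⟨y, hy⟩)

lemma hasK4Minor_iff_k4On {G : SimpleGraph V} : HasK4Minor G ↔ K4On G := by
  constructor
  · rintro ⟨B, h1, h2, h3, h4⟩
    exact ⟨B, h1, fun i => (connOn_iff_induce_connected (h1 i)).2 (h2 i), h3, h4⟩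
  · rintro ⟨B, h1, h2, h3, h4⟩
    exact ⟨B, h1, fun i => (connOn_iff_induce_connected (h1 i)).1 (h2 i), h3, h4⟩

lemma k4On_mono {G G' : SimpleGraph V} (h : G ≤ G') : K4On G → K4On G' := by
  rintro ⟨B, h1, h2, h3, h4⟩
  refine ⟨B, h1, fun i x hx y hy => ?_, h3, fun i j hij => ?_⟩
  · exact Relation.ReflTransGen.mono (fun a b hab => ⟨hab.1, hab.2.1, h hab.2.2⟩) _ _ (h2 i hx hy)
  · obtain ⟨a, ha, b, hb, hab⟩ := h4 i j hij
    exact ⟨a, ha, b, hb, h hab⟩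

lemma chain_avoid {R R' : V → V → Prop} (v : V) (hvv : ¬ R v v)
    (hstep : ∀ p q, R p q → p ≠ v → q ≠ v → R' p q)
    (hbp : ∀ p q, R p v → R v q → p ≠ q → R' p q) :
    ∀ {x y}, Relation.ReflTransGen R x y → x ≠ v → y ≠ v → Relation.ReflTransGen R' x y := by
  intro x y h
  intro hx hy
  revert hx
  have main : (x ≠ v → Relation.ReflTransGen R' x y) ∧
      (x = v → ∀ p, R p v → p ≠ v → Relation.ReflTransGen R' p y) := by
    induction h using Relation.ReflTransGen.head_induction_on with
    | refl => exact ⟨fun _ => Relation.ReflTransGen.refl, fun hv => absurd hv hy⟩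
    | @head a c h' hcb ih =>
      constructor
      · intro ha
        by_cases hc : c = v
        · exact ih.2 hc a (hc ▸ h') ha
        · exact Relation.ReflTransGen.head (hstep a c h' ha hc) (ih.1 hc)
      · intro hav p hpv hp
        by_cases hc : c = v
        · rw [hav, hc] at h'
          exact absurd h' hvv
        · by_cases hpc : p = c
          · exact hpc ▸ ih.1 hc
          · exact Relation.ReflTransGen.head (hbp p c hpv (hav ▸ h') hpc) (ih.1 hc)
  exact fun hx => main.1 hx

lemma eraseVertex_le {G : SimpleGraph V} {v : V} : eraseVertex G v ≤ G := fun _ _ h => h.1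

lemma not_k4On_bot : ¬ K4On (⊥ : SimpleGraph V) := by
  rintro ⟨B, h1, h2, h3, h4⟩
  obtain ⟨a, -, b, -, hab⟩ := h4 0 1 (by decide)
  exact hab

end Infra
section Surgery
variable {V : Type*} {G : SimpleGraph V}

lemma exists_nbr_in {s : Set V} (hconn : ConnOn G s) {v w : V} (hv : v ∈ s) (hw : w ∈ s)
    (hwv : w ≠ v) : ∃ z ∈ s, G.Adj v z := by
  rcases (hconn hv hw).cases_head with heq | ⟨c, hc, -⟩
  · exact absurd heq.symm hwv
  · exact ⟨c, hc.2.1, hc.2.2⟩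

lemma branch_not_single {B : Fin 4 → Set V}
    (h3 : ∀ i j, i ≠ j → Disjoint (B i) (B j))
    (h4 : ∀ i j, i ≠ j → ∃ a ∈ B i, ∃ b ∈ B j, G.Adj a b)
    {i : Fin 4} {v x y : V} (hsub : G.neighborSet v ⊆ {x, y}) (hvi : v ∈ B i)
    (hsingle : ∀ w ∈ B i, w = v) : False := by
  have hne : ∀ j : Fin 4, j ≠ j + 1 ∧ j ≠ j + 2 ∧ j ≠ j + 3 ∧ j + 1 ≠ j + 2 ∧
      j + 1 ≠ j + 3 ∧ j + 2 ≠ j + 3 := by decide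
  obtain ⟨a1, ha1, b1, hb1, hab1⟩ := h4 i (i+1) (hne i).1
  obtain ⟨a2, ha2, b2, hb2, hab2⟩ := h4 i (i+2) (hne i).2.1
  obtain ⟨a3, ha3, b3, hb3, hab3⟩ := h4 i (i+3) (hne i).2.2.1
  rw [hsingle a1 ha1] at hab1
  rw [hsingle a2 ha2] at hab2
  rw [hsingle a3 ha3] at hab3
  have m1 : b1 = x ∨ b1 = y := by simpa using hsub hab1
  have m2 : b2 = x ∨ b2 = y := by simpa using hsub hab2
  have m3 : b3 = x ∨ b3 = y := by simpa using hsub hab3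
  have d12 : b1 ≠ b2 := fun h =>
    Set.disjoint_left.1 (h3 _ _ (hne i).2.2.2.1) hb1 (h ▸ hb2)
  have d13 : b1 ≠ b3 := fun h =>
    Set.disjoint_left.1 (h3 _ _ (hne i).2.2.2.2.1) hb1 (h ▸ hb3)
  have d23 : b2 ≠ b3 := fun h =>
    Set.disjoint_left.1 (h3 _ _ (hne i).2.2.2.2.2) hb2 (h ▸ hb3)
  rcases m1 with rfl | rfl <;> rcases m2 with h2' | h2' <;> rcases m3 with h3' | h3' <;>
    simp_all

/-- Lifting a `K₄` system through a contraction of an actual edge. -/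
lemma k4On_of_contract {u v : V} (huv : G.Adj u v) (h : K4On (contractTo G u v)) :
    K4On G := by
  obtain ⟨B, h1, h2, h3, h4⟩ := h
  have hone : ∀ j : Fin 4, j ≠ j + 1 := by decide
  have hvB : ∀ i, v ∉ B i := by
    intro i hv
    by_cases hw : ∃ w ∈ B i, w ≠ v
    · obtain ⟨w, hwmem, hwv⟩ := hw
      rcases (h2 i hv hwmem).cases_head with heq | ⟨c, hc, -⟩
      · exact hwv heq.symm
      · exact hc.2.2.2.1 rfl
    · push_neg at hw
      obtain ⟨a, ha, b, hb, hab⟩ := h4 i (i+1) (hone i)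
      rw [hw a ha] at hab
      exact hab.2.1 rfl
  refine ⟨fun i => B i ∪ {w | w = v ∧ u ∈ B i}, fun i => (h1 i).mono Set.subset_union_left,
    ?_, ?_, ?_⟩
  · -- connectivity
    intro i
    set s' := B i ∪ {w | w = v ∧ u ∈ B i} with hs'
    have hchain : ∀ ⦃x⦄, x ∈ B i → ∀ ⦃y⦄, y ∈ B i →
        Relation.ReflTransGen (fun a b => a ∈ s' ∧ b ∈ s' ∧ G.Adj a b) x y := by
      intro x hx y hy
      refine rt_bind ?_ (h2 i hx hy)
      rintro a b ⟨ha, hb, hne, hav, hbv, hcase⟩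
      rcases hcase with hG | ⟨hau, hvb⟩ | ⟨hbu, hva⟩
      · exact Relation.ReflTransGen.single ⟨Or.inl ha, Or.inl hb, hG⟩
      · subst hau
        have hvmem : v ∈ s' := Or.inr ⟨rfl, ha⟩
        exact Relation.ReflTransGen.head ⟨Or.inl ha, hvmem, huv⟩
          (Relation.ReflTransGen.single ⟨hvmem, Or.inl hb, hvb⟩)
      · subst hbu
        have hvmem : v ∈ s' := Or.inr ⟨rfl, hb⟩
        exact Relation.ReflTransGen.head ⟨Or.inl ha, hvmem, hva.symm⟩
          (Relation.ReflTransGen.single ⟨hvmem, Or.inl hb, huv.symm⟩)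
    have hanchor : ∀ ⦃x⦄, x ∈ s' → ∃ x0 ∈ B i,
        Relation.ReflTransGen (fun a b => a ∈ s' ∧ b ∈ s' ∧ G.Adj a b) x x0 ∧
        Relation.ReflTransGen (fun a b => a ∈ s' ∧ b ∈ s' ∧ G.Adj a b) x0 x := by
      rintro x (hx | ⟨rfl, hu⟩)
      · exact ⟨x, hx, Relation.ReflTransGen.refl, Relation.ReflTransGen.refl⟩
      · refine ⟨u, hu, ?_, ?_⟩
        · exact Relation.ReflTransGen.single ⟨Or.inr ⟨rfl, hu⟩, Or.inl hu, huv.symm⟩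
        · exact Relation.ReflTransGen.single ⟨Or.inl hu, Or.inr ⟨rfl, hu⟩, huv⟩
    intro x hx y hy
    obtain ⟨x0, hx0, hxx0, -⟩ := hanchor hx
    obtain ⟨y0, hy0, -, hy0y⟩ := hanchor hy
    exact (hxx0.trans (hchain hx0 hy0)).trans hy0y
  · -- disjointness
    intro i j hij
    rw [Set.disjoint_left]
    rintro a (ha | ⟨ha', hui⟩) (hb | ⟨hb', huj⟩)
    · exact Set.disjoint_left.1 (h3 i j hij) ha hb
    · exact hvB i (hb' ▸ ha)
    · exact hvB j (ha' ▸ hb)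
    · exact Set.disjoint_left.1 (h3 i j hij) hui huj
  · -- adjacency
    intro i j hij
    obtain ⟨a, ha, b, hb, hne, hav, hbv, hcase⟩ := h4 i j hij
    rcases hcase with hG | ⟨hau, hvb⟩ | ⟨hbu, hva⟩
    · exact ⟨a, Or.inl ha, b, Or.inl hb, hG⟩
    · exact ⟨v, Or.inr ⟨rfl, hau ▸ ha⟩, b, Or.inl hb, hvb⟩
    · exact ⟨a, Or.inl ha, v, Or.inr ⟨rfl, hbu ▸ hb⟩, hva.symm⟩

end Surgery
section Push
variable {V : Type*} {G : SimpleGraph V}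

lemma k4On_erase_of_subsingleton {v : V} (hdeg : (G.neighborSet v).Subsingleton)
    (h : K4On G) : K4On (eraseVertex G v) := by
  obtain ⟨B, h1, h2, h3, h4⟩ := h
  by_cases hv : ∃ i, v ∈ B i
  · obtain ⟨i, hvi⟩ := hv
    -- v's neighborhood is contained in a pair
    obtain ⟨p, q, hsub⟩ : ∃ p q, G.neighborSet v ⊆ {p, q} := by
      rcases Set.eq_empty_or_nonempty (G.neighborSet v) with hN | ⟨z, hz⟩
      · exact ⟨v, v, by rw [hN]; exact Set.empty_subset _⟩
      · exact ⟨z, z, fun w hw => by simp [hdeg hw hz]⟩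
    have hBi : ∃ w ∈ B i, w ≠ v := by
      by_contra hcon
      push_neg at hcon
      exact branch_not_single h3 h4 hsub hvi hcon
    obtain ⟨w, hw, hwv⟩ := hBi
    obtain ⟨z, hzB, hvz⟩ := exists_nbr_in (h2 i) hvi hw hwv
    refine ⟨fun j => B j \ {v}, ?_, ?_, ?_, ?_⟩
    · intro j
      by_cases hji : j = i
      · subst hji; exact ⟨w, hw, hwv⟩
      · obtain ⟨e, he⟩ := h1 j
        exact ⟨e, he, fun hev => Set.disjoint_left.1 (h3 j i hji) he
          (show e ∈ B i from by rw [show e = v from hev]; exact hvi)⟩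
    · intro j x hx y hy
      refine chain_avoid v (fun hr => G.irrefl hr.2.2) ?_ ?_ (h2 j hx.1 hy.1) hx.2 hy.2
      · rintro p q ⟨hp, hq, hpq⟩ hpv hqv
        exact ⟨⟨hp, hpv⟩, ⟨hq, hqv⟩, hpq, hpv, hqv⟩
      · rintro p q ⟨hp, -, hpv⟩ ⟨-, hq, hvq⟩ hpq
        exact absurd (hdeg (show p ∈ G.neighborSet v from hpv.symm)
          (show q ∈ G.neighborSet v from hvq)) hpq
    · intro j k hjk
      exact (h3 j k hjk).mono Set.diff_subset Set.diff_subset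
    · intro j k hjk
      obtain ⟨a, ha, b, hb, hab⟩ := h4 j k hjk
      by_cases hav : a = v
      · have hvj : v ∈ B j := hav ▸ ha
        have hji : j = i := by
          by_contra hne
          exact Set.disjoint_left.1 (h3 j i hne) hvj hvi
        have hab' : G.Adj v b := hav ▸ hab
        have hbz : b = z := hdeg (show b ∈ G.neighborSet v from hab') hvz
        exact absurd (show z ∈ B k by rw [← hbz]; exact hb)
          (fun hzk => Set.disjoint_left.1 (h3 j k hjk) (show z ∈ B j by rw [hji]; exact hzB) hzk)
      · by_cases hbv : b = v
        · have hvk : v ∈ B k := hbv ▸ hb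
          have hki : k = i := by
            by_contra hne
            exact Set.disjoint_left.1 (h3 k i hne) hvk hvi
          have hab' : G.Adj a v := hbv ▸ hab
          have haz : a = z := hdeg (show a ∈ G.neighborSet v from hab'.symm) hvz
          exact absurd ha (fun hzj => Set.disjoint_left.1 (h3 j k hjk) hzj
            (show a ∈ B k by rw [hki, haz]; exact hzB))
        · exact ⟨a, ⟨ha, hav⟩, b, ⟨hb, hbv⟩, hab, hav, hbv⟩
  · push_neg at hv
    refine ⟨B, h1, ?_, h3, ?_⟩
    · intro j x hx y hy
      refine Relation.ReflTransGen.mono ?_ _ _ (h2 j hx hy)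
      rintro a b ⟨ha, hb, hab⟩
      exact ⟨ha, hb, hab, fun e => hv j (e ▸ ha), fun e => hv j (e ▸ hb)⟩
    · intro j k hjk
      obtain ⟨a, ha, b, hb, hab⟩ := h4 j k hjk
      exact ⟨a, ha, b, hb, hab, fun e => hv j (e ▸ ha), fun e => hv k (e ▸ hb)⟩

lemma k4On_erase_of_triangle {v x y : V} (hxy : x ≠ y) (hN : G.neighborSet v = {x, y})
    (hadj : G.Adj x y) (h : K4On G) : K4On (eraseVertex G v) := by
  obtain ⟨B, h1, h2, h3, h4⟩ := h
  have hmem : ∀ {w : V}, G.Adj v w → w = x ∨ w = y := by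
    intro w hw
    have : w ∈ G.neighborSet v := hw
    rw [hN] at this
    simpa using this
  have hpair : ∀ {p q : V}, G.Adj v p → G.Adj v q → p ≠ q → G.Adj p q := by
    intro p q hp hq hpq
    rcases hmem hp with rfl | rfl <;> rcases hmem hq with h' | h' <;>
      first
        | exact absurd h' hpq.symm
        | (subst h'; exact hadj)
        | (subst h'; exact hadj.symm)
        | exact absurd rfl hpq
  by_cases hv : ∃ i, v ∈ B i
  · obtain ⟨i, hvi⟩ := hv
    have hBi : ∃ w ∈ B i, w ≠ v := by
      by_contra hcon
      push_neg at hcon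
      exact branch_not_single h3 h4 hN.subset hvi hcon
    obtain ⟨w, hw, hwv⟩ := hBi
    obtain ⟨z, hzB, hvz⟩ := exists_nbr_in (h2 i) hvi hw hwv
    refine ⟨fun j => B j \ {v}, ?_, ?_, ?_, ?_⟩
    · intro j
      by_cases hji : j = i
      · subst hji; exact ⟨w, hw, hwv⟩
      · obtain ⟨e, he⟩ := h1 j
        exact ⟨e, he, fun hev => Set.disjoint_left.1 (h3 j i hji) he
          (show e ∈ B i from by rw [show e = v from hev]; exact hvi)⟩
    · intro j x' hx y' hy
      refine chain_avoid v (fun hr => G.irrefl hr.2.2) ?_ ?_ (h2 j hx.1 hy.1) hx.2 hy.2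
      · rintro p q ⟨hp, hq, hpq⟩ hpv hqv
        exact ⟨⟨hp, hpv⟩, ⟨hq, hqv⟩, hpq, hpv, hqv⟩
      · rintro p q ⟨hp, -, hpv⟩ ⟨-, hq, hvq⟩ hpq
        exact ⟨⟨hp, hpv.ne⟩, ⟨hq, hvq.ne'⟩, hpair hpv.symm hvq hpq, hpv.ne, hvq.ne'⟩
    · intro j k hjk
      exact (h3 j k hjk).mono Set.diff_subset Set.diff_subset
    · intro j k hjk
      obtain ⟨a, ha, b, hb, hab⟩ := h4 j k hjk
      by_cases hav : a = v
      · have hvj : v ∈ B j := hav ▸ ha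
        have hji : j = i := by
          by_contra hne
          exact Set.disjoint_left.1 (h3 j i hne) hvj hvi
        have hab' : G.Adj v b := hav ▸ hab
        have hzBj : z ∈ B j := by rw [hji]; exact hzB
        have hzb : z ≠ b := fun e =>
          Set.disjoint_left.1 (h3 j k hjk) hzBj (e ▸ hb)
        exact ⟨z, ⟨hzBj, hvz.ne'⟩, b, ⟨hb, hab'.ne'⟩,
          hpair hvz hab' hzb, hvz.ne', hab'.ne'⟩
      · by_cases hbv : b = v
        · have hvk : v ∈ B k := hbv ▸ hb
          have hki : k = i := by
            by_contra hne
            exact Set.disjoint_left.1 (h3 k i hne) hvk hvi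
          have hab' : G.Adj a v := hbv ▸ hab
          have hzBk : z ∈ B k := by rw [hki]; exact hzB
          have haz : a ≠ z := fun e =>
            Set.disjoint_left.1 (h3 j k hjk) ha (e ▸ hzBk)
          exact ⟨a, ⟨ha, hab'.ne⟩, z, ⟨hzBk, hvz.ne'⟩,
            hpair hab'.symm hvz haz, hab'.ne, hvz.ne'⟩
        · exact ⟨a, ⟨ha, hav⟩, b, ⟨hb, hbv⟩, hab, hav, hbv⟩
  · push_neg at hv
    refine ⟨B, h1, ?_, h3, ?_⟩
    · intro j x' hx y' hy
      refine Relation.ReflTransGen.mono ?_ _ _ (h2 j hx hy)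
      rintro a b ⟨ha, hb, hab⟩
      exact ⟨ha, hb, hab, fun e => hv j (e ▸ ha), fun e => hv j (e ▸ hb)⟩
    · intro j k hjk
      obtain ⟨a, ha, b, hb, hab⟩ := h4 j k hjk
      exact ⟨a, ha, b, hb, hab, fun e => hv j (e ▸ ha), fun e => hv k (e ▸ hb)⟩

lemma k4On_contract_of_deg2 {u v x : V} (hux : u ≠ x)
    (hN : G.neighborSet v = {u, x}) (h : K4On G) : K4On (contractTo G u v) := by
  obtain ⟨B, h1, h2, h3, h4⟩ := h
  have hvu : G.Adj v u := by
    have : u ∈ G.neighborSet v := by rw [hN]; exact Set.mem_insert _ _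
    exact this
  have hvx : G.Adj v x := by
    have : x ∈ G.neighborSet v := by rw [hN]; exact Set.mem_insert_iff.2 (Or.inr rfl)
    exact this
  have hmem : ∀ {w : V}, G.Adj v w → w = u ∨ w = x := by
    intro w hw
    have : w ∈ G.neighborSet v := hw
    rw [hN] at this
    simpa using this
  have hpair : ∀ {p q : V}, G.Adj v p → G.Adj v q → p ≠ q → (contractTo G u v).Adj p q := by
    intro p q hp hq hpq
    rcases hmem hp with rfl | rfl <;> rcases hmem hq with h' | h'
    · exact absurd h' hpq.symm
    · subst h'; exact ⟨hux, hp.ne', hq.ne', Or.inr (Or.inl ⟨rfl, hvx⟩)⟩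
    · subst h'; exact ⟨hux.symm, hp.ne', hq.ne', Or.inr (Or.inr ⟨rfl, hvx⟩)⟩
    · exact absurd h' hpq.symm
  by_cases hv : ∃ i, v ∈ B i
  · obtain ⟨i, hvi⟩ := hv
    have hBi : ∃ w ∈ B i, w ≠ v := by
      by_contra hcon
      push_neg at hcon
      exact branch_not_single h3 h4 hN.subset hvi hcon
    obtain ⟨w, hw, hwv⟩ := hBi
    obtain ⟨z, hzB, hvz⟩ := exists_nbr_in (h2 i) hvi hw hwv
    refine ⟨fun j => B j \ {v}, ?_, ?_, ?_, ?_⟩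
    · intro j
      by_cases hji : j = i
      · subst hji; exact ⟨w, hw, hwv⟩
      · obtain ⟨e, he⟩ := h1 j
        exact ⟨e, he, fun hev => Set.disjoint_left.1 (h3 j i hji) he
          (show e ∈ B i from by rw [show e = v from hev]; exact hvi)⟩
    · intro j x' hx y' hy
      refine chain_avoid v (fun hr => G.irrefl hr.2.2) ?_ ?_ (h2 j hx.1 hy.1) hx.2 hy.2
      · rintro p q ⟨hp, hq, hpq⟩ hpv hqv
        exact ⟨⟨hp, hpv⟩, ⟨hq, hqv⟩, hpq.ne, hpv, hqv, Or.inl hpq⟩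
      · rintro p q ⟨hp, -, hpv⟩ ⟨-, hq, hvq⟩ hpq
        exact ⟨⟨hp, hpv.ne⟩, ⟨hq, hvq.ne'⟩, hpair hpv.symm hvq hpq⟩
    · intro j k hjk
      exact (h3 j k hjk).mono Set.diff_subset Set.diff_subset
    · intro j k hjk
      obtain ⟨a, ha, b, hb, hab⟩ := h4 j k hjk
      by_cases hav : a = v
      · have hvj : v ∈ B j := hav ▸ ha
        have hji : j = i := by
          by_contra hne
          exact Set.disjoint_left.1 (h3 j i hne) hvj hvi
        have hab' : G.Adj v b := hav ▸ hab
        have hzBj : z ∈ B j := by rw [hji]; exact hzB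
        have hzb : z ≠ b := fun e =>
          Set.disjoint_left.1 (h3 j k hjk) hzBj (e ▸ hb)
        exact ⟨z, ⟨hzBj, hvz.ne'⟩, b, ⟨hb, hab'.ne'⟩, hpair hvz hab' hzb⟩
      · by_cases hbv : b = v
        · have hvk : v ∈ B k := hbv ▸ hb
          have hki : k = i := by
            by_contra hne
            exact Set.disjoint_left.1 (h3 k i hne) hvk hvi
          have hab' : G.Adj a v := hbv ▸ hab
          have hzBk : z ∈ B k := by rw [hki]; exact hzB
          have haz : a ≠ z := fun e =>
            Set.disjoint_left.1 (h3 j k hjk) ha (e ▸ hzBk)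
          exact ⟨a, ⟨ha, hab'.ne⟩, z, ⟨hzBk, hvz.ne'⟩, hpair hab'.symm hvz haz⟩
        · exact ⟨a, ⟨ha, hav⟩, b, ⟨hb, hbv⟩, hab.ne, hav, hbv, Or.inl hab⟩
  · push_neg at hv
    refine ⟨B, h1, ?_, h3, ?_⟩
    · intro j x' hx y' hy
      refine Relation.ReflTransGen.mono ?_ _ _ (h2 j hx hy)
      rintro a b ⟨ha, hb, hab⟩
      exact ⟨ha, hb, hab.ne, fun e => hv j (e ▸ ha), fun e => hv j (e ▸ hb), Or.inl hab⟩
    · intro j k hjk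
      obtain ⟨a, ha, b, hb, hab⟩ := h4 j k hjk
      exact ⟨a, ha, b, hb, hab.ne, fun e => hv j (e ▸ ha), fun e => hv k (e ▸ hb), Or.inl hab⟩

end Push
section Count
variable {V : Type*} {G : SimpleGraph V}

lemma ncard_erase_lt [Fintype V] {v z : V} (hvz : G.Adj v z) :
    (eraseVertex G v).edgeSet.ncard < G.edgeSet.ncard := by
  apply Set.ncard_lt_ncard _ (Set.toFinite _)
  rw [Set.ssubset_iff_of_subset (SimpleGraph.edgeSet_mono eraseVertex_le)]
  refine ⟨s(v,z), (SimpleGraph.mem_edgeSet _).2 hvz, fun hmem => ?_⟩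
  exact ((SimpleGraph.mem_edgeSet _).1 hmem).2.1 rfl

lemma ncard_contract_lt [Fintype V] {u v : V} (huv : G.Adj u v) :
    (contractTo G u v).edgeSet.ncard < G.edgeSet.ncard := by
  classical
  set f : V → V := fun w => if w = v then u else w with hf
  have hfv : f v = u := by simp [hf]
  have hfother : ∀ w, w ≠ v → f w = w := fun w hw => by simp [hf, hw]
  have hsub : (contractTo G u v).edgeSet ⊆ (Sym2.map f) '' (G.edgeSet \ {s(u,v)}) := by
    intro e he
    induction e using Sym2.ind with
    | _ a b =>
      rw [SimpleGraph.mem_edgeSet] at he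
      obtain ⟨hne, hav, hbv, hcase⟩ := he
      rcases hcase with hG | ⟨hau, hvb⟩ | ⟨hbu, hva⟩
      · refine ⟨s(a,b), ⟨(SimpleGraph.mem_edgeSet _).2 hG, fun hmem => ?_⟩, ?_⟩
        · have : v ∈ s(a,b) := by
            rw [show s(a,b) = s(u,v) from hmem]
            exact Sym2.mem_mk_right u v
          rcases Sym2.mem_iff.1 this with h' | h'
          · exact hav h'.symm
          · exact hbv h'.symm
        · rw [Sym2.map_pair_eq, hfother a hav, hfother b hbv]
      · refine ⟨s(v,b), ⟨(SimpleGraph.mem_edgeSet _).2 hvb, fun hmem => ?_⟩, ?_⟩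
        · rcases Sym2.eq_iff.1 (show s(v,b) = s(u,v) from hmem) with ⟨h1, -⟩ | ⟨-, h2⟩
          · exact huv.ne' h1
          · exact hne (hau.trans h2.symm)
        · rw [Sym2.map_pair_eq, hfv, hfother b hbv, hau]
      · refine ⟨s(v,a), ⟨(SimpleGraph.mem_edgeSet _).2 hva, fun hmem => ?_⟩, ?_⟩
        · rcases Sym2.eq_iff.1 (show s(v,a) = s(u,v) from hmem) with ⟨h1, -⟩ | ⟨-, h2⟩
          · exact huv.ne' h1
          · exact hne (h2.trans hbu.symm)
        · rw [Sym2.map_pair_eq, hfv, hfother a hav, hbu, Sym2.eq_swap]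
  calc (contractTo G u v).edgeSet.ncard
      ≤ ((Sym2.map f) '' (G.edgeSet \ {s(u,v)})).ncard :=
        Set.ncard_le_ncard hsub (Set.toFinite _)
    _ ≤ (G.edgeSet \ {s(u,v)}).ncard := Set.ncard_image_le (Set.toFinite _)
    _ < G.edgeSet.ncard :=
        Set.ncard_diff_singleton_lt_of_mem ((SimpleGraph.mem_edgeSet _).2 huv) (Set.toFinite _)

lemma ncard_deleteEdge_lt [Fintype V] {u v : V} (huv : G.Adj u v) :
    (G.deleteEdges {s(u,v)}).edgeSet.ncard < G.edgeSet.ncard := by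
  rw [SimpleGraph.edgeSet_deleteEdges]
  exact Set.ncard_diff_singleton_lt_of_mem ((SimpleGraph.mem_edgeSet _).2 huv) (Set.toFinite _)

end Count
section Pickers
variable {V : Type*}

/-- `v` has at least 3 neighbours. -/
def Deg3 (G : SimpleGraph V) (v : V) : Prop :=
  ∃ a b c, a ≠ b ∧ a ≠ c ∧ b ≠ c ∧ G.Adj v a ∧ G.Adj v b ∧ G.Adj v c

/-- `v` has at least 4 neighbours. -/
def Deg4 (G : SimpleGraph V) (v : V) : Prop :=
  ∃ a b c d, a ≠ b ∧ a ≠ c ∧ a ≠ d ∧ b ≠ c ∧ b ≠ d ∧ c ≠ d ∧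
    G.Adj v a ∧ G.Adj v b ∧ G.Adj v c ∧ G.Adj v d

lemma exists3_subst {P : V → Prop} {a b c u v : V} (hab : a ≠ b) (hac : a ≠ c) (hbc : b ≠ c)
    (h : ∀ t, t = a ∨ t = b ∨ t = c → t ≠ v → P t)
    (hcase : (v ≠ a ∧ v ≠ b ∧ v ≠ c) ∨ (P u ∧ u ≠ a ∧ u ≠ b ∧ u ≠ c)) :
    ∃ x y z, x ≠ y ∧ x ≠ z ∧ y ≠ z ∧ P x ∧ P y ∧ P z := by
  rcases hcase with ⟨h1, h2, h3⟩ | ⟨hPu, h1, h2, h3⟩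
  · exact ⟨a, b, c, hab, hac, hbc, h a (Or.inl rfl) (fun e => h1 e.symm),
      h b (Or.inr (Or.inl rfl)) (fun e => h2 e.symm),
      h c (Or.inr (Or.inr rfl)) (fun e => h3 e.symm)⟩
  · by_cases hva : a = v
    · exact ⟨u, b, c, h2, h3, hbc, hPu,
        h b (Or.inr (Or.inl rfl)) (fun e => hab (hva.trans e.symm)),
        h c (Or.inr (Or.inr rfl)) (fun e => hac (hva.trans e.symm))⟩
    · by_cases hvb : b = v
      · exact ⟨a, u, c, Ne.symm h1, hac, h3, h a (Or.inl rfl) hva, hPu,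
          h c (Or.inr (Or.inr rfl)) (fun e => hbc (hvb.trans e.symm))⟩
      · by_cases hvc : c = v
        · exact ⟨a, b, u, hab, Ne.symm h1, Ne.symm h2,
            h a (Or.inl rfl) hva, h b (Or.inr (Or.inl rfl)) hvb, hPu⟩
        · exact ⟨a, b, c, hab, hac, hbc, h a (Or.inl rfl) hva,
            h b (Or.inr (Or.inl rfl)) hvb, h c (Or.inr (Or.inr rfl)) hvc⟩

lemma pick3_of_four {P : V → Prop} {a b c d q : V}
    (hab : a ≠ b) (hac : a ≠ c) (had : a ≠ d) (hbc : b ≠ c) (hbd : b ≠ d) (hcd : c ≠ d)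
    (ha : P a) (hb : P b) (hc : P c) (hd : P d) :
    ∃ x y z, x ≠ y ∧ x ≠ z ∧ y ≠ z ∧ (x ≠ q ∧ P x) ∧ (y ≠ q ∧ P y) ∧ (z ≠ q ∧ P z) := by
  by_cases h1 : a = q
  · exact ⟨b, c, d, hbc, hbd, hcd, ⟨fun e => hab (h1.symm ▸ e ▸ rfl), hb⟩,
      ⟨fun e => hac (h1.trans e.symm), hc⟩, ⟨fun e => had (h1.trans e.symm), hd⟩⟩
  · by_cases h2 : b = q
    · exact ⟨a, c, d, hac, had, hcd, ⟨h1, ha⟩,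
        ⟨fun e => hbc (h2.trans e.symm), hc⟩, ⟨fun e => hbd (h2.trans e.symm), hd⟩⟩
    · by_cases h3 : c = q
      · exact ⟨a, b, d, hab, had, hbd, ⟨h1, ha⟩, ⟨h2, hb⟩,
          ⟨fun e => hcd (h3.trans e.symm), hd⟩⟩
      · exact ⟨a, b, c, hab, hac, hbc, ⟨h1, ha⟩, ⟨h2, hb⟩, ⟨h3, hc⟩⟩

lemma pick2_of_three {P : V → Prop} {a b c q : V}
    (hab : a ≠ b) (hac : a ≠ c) (hbc : b ≠ c) (ha : P a) (hb : P b) (hc : P c) :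
    ∃ x y, x ≠ y ∧ x ≠ q ∧ y ≠ q ∧ P x ∧ P y := by
  by_cases h1 : a = q
  · exact ⟨b, c, hbc, fun e => hab (h1.trans e.symm), fun e => hac (h1.trans e.symm), hb, hc⟩
  · by_cases h2 : b = q
    · exact ⟨a, c, hac, h1, fun e => hbc (h2.trans e.symm), ha, hc⟩
    · exact ⟨a, b, hab, h1, h2, ha, hb⟩

lemma pick_avoid2 {P : V → Prop} {a b c p q : V}
    (hab : a ≠ b) (hac : a ≠ c) (hbc : b ≠ c) (ha : P a) (hb : P b) (hc : P c) :
    ∃ t, P t ∧ t ≠ p ∧ t ≠ q := by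
  by_cases h1 : a ≠ p ∧ a ≠ q
  · exact ⟨a, ha, h1.1, h1.2⟩
  · by_cases h2 : b ≠ p ∧ b ≠ q
    · exact ⟨b, hb, h2.1, h2.2⟩
    · refine ⟨c, hc, ?_, ?_⟩ <;>
      · intro e
        push_neg at h1 h2
        rcases Classical.em (a = p) with h | h <;> rcases Classical.em (b = p) with h' | h' <;>
          first
            | exact hab (h.trans h'.symm)
            | simp_all

lemma pick1_of_two {P : V → Prop} {a b q : V} (hab : a ≠ b) (ha : P a) (hb : P b) :
    ∃ t, t ≠ q ∧ P t := by
  by_cases h1 : a = q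
  · exact ⟨b, fun e => hab (h1.trans e.symm), hb⟩
  · exact ⟨a, h1, ha⟩

lemma k4On_of_four_clique {G : SimpleGraph V} {v a b c : V}
    (hva : G.Adj v a) (hvb : G.Adj v b) (hvc : G.Adj v c)
    (hab : G.Adj a b) (hac : G.Adj a c) (hbc : G.Adj b c) : K4On G := by
  have d1 : v ≠ a := hva.ne
  have d2 : v ≠ b := hvb.ne
  have d3 : v ≠ c := hvc.ne
  have d4 : a ≠ b := hab.ne
  have d5 : a ≠ c := hac.ne
  have d6 : b ≠ c := hbc.ne
  refine ⟨fun i => {![v,a,b,c] i}, fun i => ⟨_, rfl⟩, ?_, ?_, ?_⟩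
  · intro i x hx y hy
    rw [Set.mem_singleton_iff] at hx hy
    subst hx; subst hy
    exact Relation.ReflTransGen.refl
  · intro i j hij
    rw [Set.disjoint_singleton]
    fin_cases i <;> fin_cases j <;> simp_all <;> tauto
  · intro i j hij
    refine ⟨_, rfl, _, rfl, ?_⟩
    fin_cases i <;> fin_cases j <;> simp_all <;>
      first
        | exact hva.symm | exact hvb.symm | exact hvc.symm
        | exact hab.symm | exact hac.symm | exact hbc.symm

end Pickers
section MinDeg
variable {V : Type*}

lemma k4On_of_min_degree_three [Fintype V] :
    ∀ (n : ℕ) (G : SimpleGraph V), G.edgeSet.ncard ≤ n →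
      (∃ a b, G.Adj a b) → (∀ v w, G.Adj v w → Deg3 G v) → K4On G := by
  intro n
  induction n with
  | zero =>
    intro G hcard ⟨a, b, hab⟩ _
    exfalso
    have h0 : G.edgeSet.ncard = 0 := Nat.le_zero.1 hcard
    have : G.edgeSet = ∅ := (Set.ncard_eq_zero (Set.toFinite _)).1 h0
    exact absurd ((SimpleGraph.mem_edgeSet _).2 hab) (this ▸ Set.notMem_empty _)
  | succ n ih =>
    intro G hcard hedge h3
    classical
    by_cases hc1 : ∃ p q, G.Adj p q ∧ Deg4 G p ∧ Deg4 G q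
    · -- delete the edge pq
      obtain ⟨p, q, hpq, hd4p, hd4q⟩ := hc1
      set G' := G.deleteEdges {s(p,q)} with hG'
      have hkeep : ∀ {x y : V}, G.Adj x y → ¬(x = p ∧ y = q) → ¬(x = q ∧ y = p) →
          G'.Adj x y := by
        intro x y h h1 h2
        rw [hG', SimpleGraph.deleteEdges_adj]
        refine ⟨h, fun e => ?_⟩
        rcases Sym2.eq_iff.1 (Set.mem_singleton_iff.1 e) with ⟨e1, e2⟩ | ⟨e1, e2⟩
        · exact h1 ⟨e1, e2⟩
        · exact h2 ⟨e1, e2⟩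
      have hedge' : ∃ a b, G'.Adj a b := by
        obtain ⟨a, b, c, d, hab, hac, had, hbc, hbd, hcd, ha, hb, hc, hd⟩ := hd4p
        obtain ⟨t, htq, hpt⟩ := pick1_of_two (q := q) hab ha hb
        exact ⟨p, t, hkeep hpt (fun ⟨_, e⟩ => htq e) (fun ⟨e, _⟩ => hpq.ne e)⟩
      have h3' : ∀ v w, G'.Adj v w → Deg3 G' v := by
        intro v w hvw
        have hGvw : G.Adj v w := (SimpleGraph.deleteEdges_adj).1 hvw |>.1
        by_cases hvp : v = p
        · subst hvp
          obtain ⟨a, b, c, d, hab, hac, had, hbc, hbd, hcd, ha, hb, hc, hd⟩ := hd4p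
          obtain ⟨x, y, z, hxy, hxz, hyz, ⟨hx, hxA⟩, ⟨hy, hyA⟩, ⟨hz, hzA⟩⟩ :=
            pick3_of_four (q := q) hab hac had hbc hbd hcd ha hb hc hd
          exact ⟨x, y, z, hxy, hxz, hyz,
            hkeep hxA (fun ⟨_, e⟩ => hx e) (fun ⟨e, _⟩ => hpq.ne e),
            hkeep hyA (fun ⟨_, e⟩ => hy e) (fun ⟨e, _⟩ => hpq.ne e),
            hkeep hzA (fun ⟨_, e⟩ => hz e) (fun ⟨e, _⟩ => hpq.ne e)⟩
        · by_cases hvq : v = q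
          · subst hvq
            obtain ⟨a, b, c, d, hab, hac, had, hbc, hbd, hcd, ha, hb, hc, hd⟩ := hd4q
            obtain ⟨x, y, z, hxy, hxz, hyz, ⟨hx, hxA⟩, ⟨hy, hyA⟩, ⟨hz, hzA⟩⟩ :=
              pick3_of_four (q := p) hab hac had hbc hbd hcd ha hb hc hd
            exact ⟨x, y, z, hxy, hxz, hyz,
              hkeep hxA (fun ⟨e, _⟩ => hpq.ne e.symm) (fun ⟨_, e⟩ => hx e),
              hkeep hyA (fun ⟨e, _⟩ => hpq.ne e.symm) (fun ⟨_, e⟩ => hy e),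
              hkeep hzA (fun ⟨e, _⟩ => hpq.ne e.symm) (fun ⟨_, e⟩ => hz e)⟩
          · obtain ⟨a, b, c, hab, hac, hbc, ha, hb, hc⟩ := h3 v w hGvw
            exact ⟨a, b, c, hab, hac, hbc,
              hkeep ha (fun ⟨e, _⟩ => hvp e) (fun ⟨e, _⟩ => hvq e),
              hkeep hb (fun ⟨e, _⟩ => hvp e) (fun ⟨e, _⟩ => hvq e),
              hkeep hc (fun ⟨e, _⟩ => hvp e) (fun ⟨e, _⟩ => hvq e)⟩
      have hcard' : G'.edgeSet.ncard ≤ n :=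
        Nat.lt_succ_iff.1 (lt_of_lt_of_le (ncard_deleteEdge_lt hpq) hcard)
      exact k4On_mono (SimpleGraph.deleteEdges_le _) (ih G' hcard' hedge' h3')
    · by_cases hc2 : ∃ p q, G.Adj p q ∧ ∀ w, ¬(G.Adj p w ∧ G.Adj q w)
      · -- contract the edge pq (no common neighbour)
        obtain ⟨p, q, hpq, hcommon⟩ := hc2
        set G' := contractTo G p q with hG'
        have hedge' : ∃ a b, G'.Adj a b := by
          obtain ⟨a, b, c, hab, hac, hbc, ha, hb, hc⟩ := h3 p q hpq
          obtain ⟨t, htq, hpt⟩ := pick1_of_two (q := q) hab ha hb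
          exact ⟨p, t, hpt.ne, hpq.ne, htq, Or.inl hpt⟩
        have h3' : ∀ v w, G'.Adj v w → Deg3 G' v := by
          intro v w hvw
          obtain ⟨hne, hvq, hwq, hcase⟩ := hvw
          by_cases hvp : v = p
          · rw [hvp] at hvq ⊢
            obtain ⟨a, b, c, hab, hac, hbc, ha, hb, hc⟩ := h3 p q hpq
            obtain ⟨x1, x2, h12, h1q, h2q, h1A, h2A⟩ :=
              pick2_of_three (q := q) hab hac hbc ha hb hc
            obtain ⟨a', b', c', hab', hac', hbc', ha', hb', hc'⟩ := h3 q p hpq.symm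
            obtain ⟨y, hyp, hyA⟩ := pick1_of_two (q := p) hab' ha' hb'
            have hynp : ¬ G.Adj p y := fun h' => hcommon y ⟨h', hyA⟩
            have hy1 : x1 ≠ y := fun e => hynp (e ▸ h1A)
            have hy2 : x2 ≠ y := fun e => hynp (e ▸ h2A)
            exact ⟨x1, x2, y, h12, hy1, hy2,
              ⟨h1A.ne, hpq.ne, h1q, Or.inl h1A⟩,
              ⟨h2A.ne, hpq.ne, h2q, Or.inl h2A⟩,
              ⟨Ne.symm hyp, hpq.ne, hyA.ne', Or.inr (Or.inl ⟨rfl, hyA⟩)⟩⟩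
          · have hGv : ∃ w0, G.Adj v w0 := by
              rcases hcase with h' | ⟨e, -⟩ | ⟨-, h'⟩
              · exact ⟨w, h'⟩
              · exact absurd e hvp
              · exact ⟨q, h'.symm⟩
            obtain ⟨w0, hw0⟩ := hGv
            obtain ⟨a, b, c, hab, hac, hbc, ha, hb, hc⟩ := h3 v w0 hw0
            by_cases hq3 : q = a ∨ q = b ∨ q = c
            · have hqv : G.Adj q v := by
                rcases hq3 with e | e | e
                · exact (e ▸ ha).symm
                · exact (e ▸ hb).symm
                · exact (e ▸ hc).symm
              have hpnv : ¬ G.Adj p v := fun h' => hcommon v ⟨h', hqv⟩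
              refine exists3_subst (u := p) (v := q) hab hac hbc ?_ (Or.inr ?_)
              · intro t ht htq'
                have hAt : G.Adj v t := by rcases ht with rfl | rfl | rfl <;> assumption
                exact ⟨hAt.ne, hvq, htq', Or.inl hAt⟩
              · refine ⟨⟨hvp, hvq, hpq.ne, Or.inr (Or.inr ⟨rfl, hqv⟩)⟩, ?_, ?_, ?_⟩
                · exact fun e => hpnv (e ▸ ha).symm
                · exact fun e => hpnv (e ▸ hb).symm
                · exact fun e => hpnv (e ▸ hc).symm
            · push_neg at hq3
              refine exists3_subst (u := p) (v := q) hab hac hbc ?_ (Or.inl hq3)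
              intro t ht htq'
              have hAt : G.Adj v t := by rcases ht with rfl | rfl | rfl <;> assumption
              exact ⟨hAt.ne, hvq, htq', Or.inl hAt⟩
        have hcard' : G'.edgeSet.ncard ≤ n :=
          Nat.lt_succ_iff.1 (lt_of_lt_of_le (ncard_contract_lt hpq) hcard)
        exact k4On_of_contract hpq (ih G' hcard' hedge' h3')
      · -- every edge has an endpoint of degree 3 and lies in a triangle
        push_neg at hc2
        obtain ⟨p0, q0, hpq0⟩ := hedge
        have hvexists : ∃ v w, G.Adj v w ∧ ¬ Deg4 G v := by
          by_cases hd : Deg4 G p0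
          · refine ⟨q0, p0, hpq0.symm, fun hd' => hc1 ⟨p0, q0, hpq0, hd, hd'⟩⟩
          · exact ⟨p0, q0, hpq0, hd⟩
        obtain ⟨v, w, hvw, hnd4⟩ := hvexists
        obtain ⟨a, b, c, hab, hac, hbc, hva, hvb, hvc⟩ := h3 v w hvw
        have hN : ∀ t, G.Adj v t → t = a ∨ t = b ∨ t = c := by
          intro t ht
          by_contra hcon
          push_neg at hcon
          exact hnd4 ⟨a, b, c, t, hab, hac, Ne.symm hcon.1, hbc, Ne.symm hcon.2.1,
            Ne.symm hcon.2.2, hva, hvb, hvc, ht⟩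
        have tri : ∀ x y, G.Adj x y → ∃ t, G.Adj x t ∧ G.Adj y t := hc2
        have edge_a : G.Adj a b ∨ G.Adj a c := by
          obtain ⟨t, hvt, hat⟩ := tri v a hva
          rcases hN t hvt with e | e | e <;> rw [e] at hat
          · exact (G.loopless.irrefl a hat).elim
          · exact Or.inl hat
          · exact Or.inr hat
        have edge_b : G.Adj b a ∨ G.Adj b c := by
          obtain ⟨t, hvt, hbt⟩ := tri v b hvb
          rcases hN t hvt with e | e | e <;> rw [e] at hbt
          · exact Or.inl hbt
          · exact (G.loopless.irrefl b hbt).elim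
          · exact Or.inr hbt
        have edge_c : G.Adj c a ∨ G.Adj c b := by
          obtain ⟨t, hvt, hct⟩ := tri v c hvc
          rcases hN t hvt with e | e | e <;> rw [e] at hct
          · exact Or.inl hct
          · exact Or.inr hct
          · exact (G.loopless.irrefl c hct).elim
        -- canonicalize
        have hcanon : (G.Adj a b ∧ G.Adj a c ∧ G.Adj b c) ∨
            (∃ x y z : V, x ≠ y ∧ x ≠ z ∧ y ≠ z ∧
              (∀ t, G.Adj v t → t = x ∨ t = y ∨ t = z) ∧
              G.Adj v x ∧ G.Adj v y ∧ G.Adj v z ∧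
              G.Adj x y ∧ G.Adj x z ∧ ¬ G.Adj y z) := by
          by_cases h1 : G.Adj a b
          · by_cases h2 : G.Adj a c
            · by_cases h3' : G.Adj b c
              · exact Or.inl ⟨h1, h2, h3'⟩
              · exact Or.inr ⟨a, b, c, hab, hac, hbc, hN, hva, hvb, hvc, h1, h2, h3'⟩
            · have hcb : G.Adj c b := edge_c.resolve_left (fun h' => h2 h'.symm)
              exact Or.inr ⟨b, a, c, hab.symm, hbc, hac,
                fun t ht => by rcases hN t ht with e | e | e <;> tauto,
                hvb, hva, hvc, h1.symm, hcb.symm, h2⟩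
          · have hac' : G.Adj a c := edge_a.resolve_left h1
            have hbc' : G.Adj b c := edge_b.resolve_left (fun h' => h1 h'.symm)
            exact Or.inr ⟨c, a, b, hac.symm, hbc.symm, hab,
              fun t ht => by rcases hN t ht with e | e | e <;> tauto,
              hvc, hva, hvb, hac'.symm, hbc'.symm, h1⟩
        rcases hcanon with ⟨h1, h2, h3'⟩ | ⟨x, y, z, hxy, hxz, hyz, hNx3, hvx, hvy, hvz, hxyA, hxzA, hnyz⟩
        · exact k4On_of_four_clique hva hvb hvc h1 h2 h3'
        · by_cases hd4x : Deg4 G x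
          · -- case 3a : contract v into y
            set G' := contractTo G y v with hG'
            have hedge' : ∃ p q, G'.Adj p q :=
              ⟨x, y, hxy, hvx.ne', hvy.ne', Or.inl hxyA⟩
            have h3'' : ∀ w1 w2, G'.Adj w1 w2 → Deg3 G' w1 := by
              intro w1 w2 hww
              obtain ⟨hne, hw1v, hw2v, hcase⟩ := hww
              by_cases hwy : w1 = y
              · rw [hwy] at hw1v ⊢
                obtain ⟨e1, e2, e3, he12, he13, he23, hE1, hE2, hE3⟩ := h3 y v hvy.symm
                obtain ⟨t, hyt, htv, htx⟩ :=
                  pick_avoid2 (p := v) (q := x) he12 he13 he23 hE1 hE2 hE3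
                have htz : t ≠ z := fun e => hnyz (e ▸ hyt)
                exact ⟨x, z, t, hxz, Ne.symm htx, Ne.symm htz,
                  ⟨hxy.symm, hvy.ne', hvx.ne', Or.inl hxyA.symm⟩,
                  ⟨hyz, hvy.ne', hvz.ne', Or.inr (Or.inl ⟨rfl, hvz⟩)⟩,
                  ⟨hyt.ne, hvy.ne', htv, Or.inl hyt⟩⟩
              · by_cases hwx : w1 = x
                · rw [hwx] at hw1v ⊢
                  obtain ⟨d1, d2, d3, d4, h12, h13, h14, h23, h24, h34, hD1, hD2, hD3, hD4⟩ := hd4x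
                  obtain ⟨t1, t2, t3, ht12, ht13, ht23, ⟨ht1v, ht1A⟩, ⟨ht2v, ht2A⟩, ⟨ht3v, ht3A⟩⟩ :=
                    pick3_of_four (q := v) h12 h13 h14 h23 h24 h34 hD1 hD2 hD3 hD4
                  exact ⟨t1, t2, t3, ht12, ht13, ht23,
                    ⟨ht1A.ne, hw1v, ht1v, Or.inl ht1A⟩,
                    ⟨ht2A.ne, hw1v, ht2v, Or.inl ht2A⟩,
                    ⟨ht3A.ne, hw1v, ht3v, Or.inl ht3A⟩⟩
                · by_cases hwz : w1 = z
                  · rw [hwz] at hw1v ⊢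
                    obtain ⟨e1, e2, e3, he12, he13, he23, hE1, hE2, hE3⟩ := h3 z v hvz.symm
                    have hyn : ¬ G.Adj z y := fun h' => hnyz h'.symm
                    by_cases hv3 : v = e1 ∨ v = e2 ∨ v = e3
                    · refine exists3_subst (u := y) (v := v) he12 he13 he23 ?_ (Or.inr ?_)
                      · intro t ht htv
                        have hAt : G.Adj z t := by rcases ht with rfl | rfl | rfl <;> assumption
                        exact ⟨hAt.ne, hw1v, htv, Or.inl hAt⟩
                      · refine ⟨⟨Ne.symm hyz, hvz.ne', hvy.ne',
                          Or.inr (Or.inr ⟨rfl, hvz⟩)⟩, ?_, ?_, ?_⟩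
                        · exact fun e => hyn (e ▸ hE1)
                        · exact fun e => hyn (e ▸ hE2)
                        · exact fun e => hyn (e ▸ hE3)
                    · push_neg at hv3
                      refine exists3_subst (u := y) (v := v) he12 he13 he23 ?_ (Or.inl hv3)
                      intro t ht htv
                      have hAt : G.Adj z t := by rcases ht with rfl | rfl | rfl <;> assumption
                      exact ⟨hAt.ne, hw1v, htv, Or.inl hAt⟩
                  · -- generic vertex
                    have hGw : ∃ w0, G.Adj w1 w0 := by
                      rcases hcase with h' | ⟨e, -⟩ | ⟨-, h'⟩
                      · exact ⟨w2, h'⟩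
                      · exact absurd e hwy
                      · rcases hNx3 w1 h' with e | e | e
                        · exact absurd e hwx
                        · exact absurd e hwy
                        · exact absurd e hwz
                    obtain ⟨w0, hw0⟩ := hGw
                    obtain ⟨e1, e2, e3, he12, he13, he23, hE1, hE2, hE3⟩ := h3 w1 w0 hw0
                    have hvn : ¬ G.Adj w1 v := fun h' => by
                      rcases hNx3 w1 h'.symm with e | e | e
                      · exact hwx e
                      · exact hwy e
                      · exact hwz e
                    refine exists3_subst (u := y) (v := v) he12 he13 he23 ?_
                      (Or.inl ⟨fun e => hvn (e ▸ hE1), fun e => hvn (e ▸ hE2),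
                        fun e => hvn (e ▸ hE3)⟩)
                    intro t ht htv
                    have hAt : G.Adj w1 t := by rcases ht with rfl | rfl | rfl <;> assumption
                    exact ⟨hAt.ne, hw1v, htv, Or.inl hAt⟩
            have hcard' : G'.edgeSet.ncard ≤ n :=
              Nat.lt_succ_iff.1 (lt_of_lt_of_le (ncard_contract_lt hvy.symm) hcard)
            exact k4On_of_contract hvy.symm (ih G' hcard' hedge' h3'')
          · -- case 3b : N(x) = {v,y,z}; contract v into x, then y into x
            have hNx : ∀ t, G.Adj x t → t = v ∨ t = y ∨ t = z := by
              intro t ht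
              by_contra hcon
              push_neg at hcon
              exact hd4x ⟨v, y, z, t, hvy.ne, hvz.ne, Ne.symm hcon.1, hyz, Ne.symm hcon.2.1,
                Ne.symm hcon.2.2, hvx.symm, hxyA, hxzA, ht⟩
            obtain ⟨e1, e2, e3, he12, he13, he23, hE1, hE2, hE3⟩ := h3 y v hvy.symm
            obtain ⟨t, hyt, htv, htx⟩ :=
              pick_avoid2 (p := v) (q := x) he12 he13 he23 hE1 hE2 hE3
            have htz : t ≠ z := fun e => hnyz (e ▸ hyt)
            have hty : t ≠ y := hyt.ne'
            obtain ⟨s, hys, hts⟩ := tri y t hyt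
            have hsv : s ≠ v := by
              intro e
              rcases hNx3 t (e ▸ hts).symm with e' | e' | e'
              · exact htx e'
              · exact hty e'
              · exact htz e'
            have hsx : s ≠ x := by
              intro e
              rcases hNx t (e ▸ hts).symm with e' | e' | e'
              · exact htv e'
              · exact hty e'
              · exact htz e'
            have hsy : s ≠ y := hys.ne'
            obtain ⟨f1, f2, f3, hf12, hf13, hf23, hF1, hF2, hF3⟩ := h3 z v hvz.symm
            obtain ⟨t', hzt', ht'v, ht'x⟩ :=
              pick_avoid2 (p := v) (q := x) hf12 hf13 hf23 hF1 hF2 hF3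
            have ht'y : t' ≠ y := fun e => hnyz (e ▸ hzt').symm
            have ht'z : t' ≠ z := hzt'.ne'
            obtain ⟨s', hzs', ht's'⟩ := tri z t' hzt'
            have hs'v : s' ≠ v := by
              intro e
              rcases hNx3 t' (e ▸ ht's').symm with e' | e' | e'
              · exact ht'x e'
              · exact ht'y e'
              · exact ht'z e'
            have hs'x : s' ≠ x := by
              intro e
              rcases hNx t' (e ▸ ht's').symm with e' | e' | e'
              · exact ht'v e'
              · exact ht'y e'
              · exact ht'z e'
            have hs'y : s' ≠ y := fun e => hnyz (e ▸ hzs').symm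
            set G1 := contractTo G x v with hG1
            set G2 := contractTo G1 x y with hG2
            have hG1xy : G1.Adj x y := ⟨hxy, hvx.ne', hvy.ne', Or.inl hxyA⟩
            have hG1yt : G1.Adj y t := ⟨hyt.ne, hvy.ne', htv, Or.inl hyt⟩
            have hG1ys : G1.Adj y s := ⟨hys.ne, hvy.ne', hsv, Or.inl hys⟩
            have hG2xz : G2.Adj x z :=
              ⟨hxz, hxy, Ne.symm hyz, Or.inl ⟨hxz, hvx.ne', hvz.ne', Or.inl hxzA⟩⟩
            have hG2xt : G2.Adj x t :=
              ⟨Ne.symm htx, hxy, hty, Or.inr (Or.inl ⟨rfl, hG1yt⟩)⟩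
            have hG2xs : G2.Adj x s :=
              ⟨Ne.symm hsx, hxy, hsy, Or.inr (Or.inl ⟨rfl, hG1ys⟩)⟩
            have h3'' : ∀ w1 w2, G2.Adj w1 w2 → Deg3 G2 w1 := by
              intro w1 w2 hww
              obtain ⟨hne, hw1y, hw2y, hcase2⟩ := hww
              by_cases hwx : w1 = x
              · rw [hwx]
                have hzs : z ≠ s := fun e => hnyz (by rw [e]; exact hys)
                exact ⟨z, t, s, Ne.symm htz, hzs, hts.ne, hG2xz, hG2xt, hG2xs⟩
              · by_cases hwv : w1 = v
                · exfalso
                  rcases hcase2 with h' | ⟨e, -⟩ | ⟨-, h'⟩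
                  · exact h'.2.1 hwv
                  · exact hwx e
                  · exact h'.2.2.1 hwv
                · by_cases hwz : w1 = z
                  · rw [hwz]
                    refine ⟨x, t', s', Ne.symm ht'x, Ne.symm hs'x, ht's'.ne, hG2xz.symm, ?_, ?_⟩
                    · exact ⟨hzt'.ne, Ne.symm hyz, ht'y,
                        Or.inl ⟨hzt'.ne, hvz.ne', ht'v, Or.inl hzt'⟩⟩
                    · exact ⟨hzs'.ne, Ne.symm hyz, hs'y,
                        Or.inl ⟨hzs'.ne, hvz.ne', hs'v, Or.inl hzs'⟩⟩
                  · -- generic vertex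
                    have hGw : ∃ w0, G.Adj w1 w0 := by
                      rcases hcase2 with h' | ⟨e, -⟩ | ⟨-, h'⟩
                      · rcases h'.2.2.2 with h'' | ⟨e, -⟩ | ⟨-, h''⟩
                        · exact ⟨w2, h''⟩
                        · exact absurd e hwx
                        · rcases hNx3 w1 h'' with e | e | e
                          · exact absurd e hwx
                          · exact absurd e hw1y
                          · exact absurd e hwz
                      · exact absurd e hwx
                      · rcases h'.2.2.2 with h'' | ⟨e, -⟩ | ⟨e, -⟩
                        · exact ⟨y, h''.symm⟩
                        · exact absurd e (Ne.symm hxy)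
                        · exact absurd e hwx
                    obtain ⟨w0, hw0⟩ := hGw
                    obtain ⟨g1, g2, g3, hg12, hg13, hg23, hGg1, hGg2, hGg3⟩ := h3 w1 w0 hw0
                    have hvn : ¬ G.Adj w1 v := fun h' => by
                      rcases hNx3 w1 h'.symm with e | e | e
                      · exact hwx e
                      · exact hw1y e
                      · exact hwz e
                    have hxn : ¬ G.Adj w1 x := fun h' => by
                      rcases hNx w1 h'.symm with e | e | e
                      · exact hwv e
                      · exact hw1y e
                      · exact hwz e
                    have hstep : ∀ t0, t0 = g1 ∨ t0 = g2 ∨ t0 = g3 → t0 ≠ y → G2.Adj w1 t0 := by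
                      intro t0 ht0 ht0y
                      have hAt : G.Adj w1 t0 := by rcases ht0 with rfl | rfl | rfl <;> assumption
                      have ht0v : t0 ≠ v := fun e => hvn (e ▸ hAt)
                      exact ⟨hAt.ne, hw1y, ht0y, Or.inl ⟨hAt.ne, hwv, ht0v, Or.inl hAt⟩⟩
                    by_cases hy3 : y = g1 ∨ y = g2 ∨ y = g3
                    · have hwyA : G.Adj w1 y := by
                        rcases hy3 with e | e | e
                        exacts [e ▸ hGg1, e ▸ hGg2, e ▸ hGg3]
                      refine exists3_subst (u := x) (v := y) hg12 hg13 hg23 hstep (Or.inr ?_)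
                      refine ⟨⟨hwx, hw1y, hxy, Or.inr (Or.inr ⟨rfl,
                        ⟨fun e => hw1y e.symm, hvy.ne', hwv, Or.inl hwyA.symm⟩⟩)⟩, ?_, ?_, ?_⟩
                      · exact fun e => hxn (e ▸ hGg1)
                      · exact fun e => hxn (e ▸ hGg2)
                      · exact fun e => hxn (e ▸ hGg3)
                    · push_neg at hy3
                      exact exists3_subst (u := x) (v := y) hg12 hg13 hg23 hstep (Or.inl hy3)
            have hcard1 : G1.edgeSet.ncard ≤ n :=
              Nat.lt_succ_iff.1 (lt_of_lt_of_le (ncard_contract_lt hvx.symm) hcard)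
            have hcard2 : G2.edgeSet.ncard ≤ n :=
              (lt_of_lt_of_le (ncard_contract_lt hG1xy) hcard1).le
            exact k4On_of_contract hvx.symm
              (k4On_of_contract hG1xy (ih G2 hcard2 ⟨x, z, hG2xz⟩ h3''))

end MinDeg
section Main
variable {V : Type*}

lemma not_k4On_of_reduces {G : SimpleGraph V} (h : ReducesToEmpty G) : ¬ K4On G := by
  induction h with
  | bot => exact not_k4On_bot
  | delete_low_degree G v hdeg h ih =>
    exact fun hk => ih (k4On_erase_of_subsingleton hdeg hk)
  | delete_triangle G v x y hxy hN hadj h ih =>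
    exact fun hk => ih (k4On_erase_of_triangle hxy hN hadj hk)
  | contract G u v x hux hN hnadj h ih =>
    exact fun hk => ih (k4On_contract_of_deg2 hux hN hk)

lemma reduces_of_not_k4On [Fintype V] :
    ∀ (n : ℕ) (G : SimpleGraph V), G.edgeSet.ncard ≤ n → ¬ K4On G → ReducesToEmpty G := by
  intro n
  induction n with
  | zero =>
    intro G hcard _
    have h0 : G.edgeSet = ∅ := (Set.ncard_eq_zero (Set.toFinite _)).1 (Nat.le_zero.1 hcard)
    rw [SimpleGraph.edgeSet_eq_empty] at h0
    exact h0 ▸ ReducesToEmpty.bot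
  | succ n ih =>
    intro G hcard hk4
    by_cases hbot : G = ⊥
    · exact hbot ▸ ReducesToEmpty.bot
    · have hedge : ∃ a b, G.Adj a b := by
        obtain ⟨e, he⟩ := (SimpleGraph.edgeSet_nonempty).2 hbot
        revert he
        refine Sym2.ind (fun a b he => ⟨a, b, (SimpleGraph.mem_edgeSet _).1 he⟩) e
      have hsmall : ∃ v w, G.Adj v w ∧ ¬ Deg3 G v := by
        by_contra hcon
        push_neg at hcon
        exact hk4 (k4On_of_min_degree_three G.edgeSet.ncard G le_rfl hedge hcon)
      obtain ⟨v, w, hvw, hnd3⟩ := hsmall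
      by_cases h2nbrs : ∃ y, G.Adj v y ∧ y ≠ w
      · obtain ⟨y, hvy, hyw⟩ := h2nbrs
        have hNsub : ∀ t, G.Adj v t → t = w ∨ t = y := by
          intro t ht
          by_contra hcon
          push_neg at hcon
          exact hnd3 ⟨w, y, t, Ne.symm hyw, Ne.symm hcon.1, Ne.symm hcon.2, hvw, hvy, ht⟩
        have hN : G.neighborSet v = {w, y} := by
          ext t
          simp only [SimpleGraph.mem_neighborSet, Set.mem_insert_iff, Set.mem_singleton_iff]
          constructor
          · exact hNsub t
          · rintro (rfl | rfl)
            exacts [hvw, hvy]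
        by_cases htri : G.Adj w y
        · refine ReducesToEmpty.delete_triangle G v w y (Ne.symm hyw) hN htri ?_
          refine ih (eraseVertex G v) ?_ ?_
          · exact Nat.lt_succ_iff.1 (lt_of_lt_of_le (ncard_erase_lt hvw) hcard)
          · exact fun h => hk4 (k4On_mono eraseVertex_le h)
        · refine ReducesToEmpty.contract G w v y (Ne.symm hyw) hN htri ?_
          refine ih (contractTo G w v) ?_ ?_
          · exact Nat.lt_succ_iff.1 (lt_of_lt_of_le (ncard_contract_lt hvw.symm) hcard)
          · exact fun h => hk4 (k4On_of_contract hvw.symm h)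
      · push_neg at h2nbrs
        have hsub : (G.neighborSet v).Subsingleton := by
          intro a ha b hb
          rw [h2nbrs a ha, h2nbrs b hb]
        refine ReducesToEmpty.delete_low_degree G v hsub ?_
        refine ih (eraseVertex G v) ?_ ?_
        · exact Nat.lt_succ_iff.1 (lt_of_lt_of_le (ncard_erase_lt hvw) hcard)
        · exact fun h => hk4 (k4On_mono eraseVertex_le h)

end Main


/-- A finite simple graph has no `K₄` minor iff it can be reduced to the empty graph
by the three reduction operations. -/
theorem statement8 {V : Type*} [Fintype V] (G : SimpleGraph V) :
    ¬ HasK4Minor G ↔ ReducesToEmpty G := by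
  constructor
  · intro h
    exact reduces_of_not_k4On G.edgeSet.ncard G le_rfl
      (fun hk => h (hasK4Minor_iff_k4On.2 hk))
  · intro h hk
    exact not_k4On_of_reduces h (hasK4Minor_iff_k4On.1 hk)
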